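/- arXiv:1409.3418 — 4 statements merged into one kernel-verified Lean document; each statement's English description precedes it below -/
import Mathlib

section
/- Let (X,d,p) be a pointed metric space such that there exists a normal scaling sequence for (X,d,p), and suppose R*_n(X,p) < ∞. Then there exist a normal scaling sequence (r_n) and a maximal self-stable (w.r.t. (r_n)) family F of sequences of points of X with p̃ ∈ F such that sup{ lim_{n→∞} d(x_n,p)/r_n : (x_n) ∈ F } = R*_n(X,p). -/
open Filter Topology Set
open scoped ENNReal

/-- A scaling sequence: strictly positive reals tending to zero. -/
def ScalingSeq (r : ℕ → ℝ) : Prop :=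
  (∀ n, 0 < r n) ∧ Tendsto r atTop (𝓝 (0 : ℝ))

/-- Two sequences of points are mutually stable w.r.t. a scaling sequence. -/
def MutuallyStable {X : Type*} [MetricSpace X] (r : ℕ → ℝ) (x y : ℕ → X) : Prop :=
  ∃ L : ℝ, Tendsto (fun n => dist (x n) (y n) / r n) atTop (𝓝 L)

/-- A family of sequences is self-stable w.r.t. a scaling sequence. -/
def SelfStable {X : Type*} [MetricSpace X] (r : ℕ → ℝ) (F : Set (ℕ → X)) : Prop :=
  ∀ x ∈ F, ∀ y ∈ F, MutuallyStable r x y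

/-- A maximal self-stable family. -/
def MaxSelfStable {X : Type*} [MetricSpace X] (r : ℕ → ℝ) (F : Set (ℕ → X)) : Prop :=
  SelfStable r F ∧ ∀ G : Set (ℕ → X), SelfStable r G → F ⊆ G → G = F

/-- A sequence of reals is eventually decreasing. -/
def EvDecr (τ : ℕ → ℝ) : Prop := ∀ᶠ n in atTop, τ (n + 1) ≤ τ n

/-- A normal scaling sequence for a pointed metric space `(X, d, p)`. -/
def NormalScaling {X : Type*} [MetricSpace X] (p : X) (r : ℕ → ℝ) : Prop :=
  ScalingSeq r ∧ EvDecr r ∧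
    ∃ x : ℕ → X, Tendsto (fun n => dist (x n) p / r n) atTop (𝓝 (1 : ℝ))

/-- The set `Ẽ₀ᵈ(E)` of eventually decreasing sequences of nonzero points of `E`
tending to zero. -/
def E0d (E : Set ℝ) : Set (ℕ → ℝ) :=
  {τ | EvDecr τ ∧ (∀ n, τ n ∈ E \ {0}) ∧ Tendsto τ atTop (𝓝 (0 : ℝ))}

/-- `Ioo a b` is a connected component of the interior of `[0,∞) \ E`. -/
def IsCompExt (E : Set ℝ) (a b : ℝ) : Prop :=
  a < b ∧ Ioo a b ⊆ interior (Ici 0 \ E) ∧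
    ∀ a' b' : ℝ, a' ≤ a → b ≤ b' → Ioo a' b' ⊆ interior (Ici 0 \ E) → a' = a ∧ b' = b

/-- The set `Ĩ_E^d` of sequences of intervals. -/
def IEd (E : Set ℝ) (a b : ℕ → ℝ) : Prop :=
  (∀ n, IsCompExt E (a n) (b n)) ∧ EvDecr a ∧ Tendsto a atTop (𝓝 (0 : ℝ)) ∧
    Tendsto (fun n => (b n - a n) / b n) atTop (𝓝 (1 : ℝ))

/-- The equivalence `x ≍ y` for sequences of strictly positive numbers. -/
def Asymp (x y : ℕ → ℝ) : Prop :=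
  ∃ c₁ c₂ : ℝ, 0 < c₁ ∧ 0 < c₂ ∧ ∀ n, c₁ * x n < y n ∧ y n < c₂ * x n

/-- `E` is `τ`-strongly porous at `0`. -/
def TPorous (E : Set ℝ) (τ : ℕ → ℝ) : Prop :=
  ∃ a b : ℕ → ℝ, IEd E a b ∧ Asymp τ a

/-- `E` is completely strongly porous at `0`. -/
def CSP (E : Set ℝ) : Prop := ∀ τ ∈ E0d E, TPorous E τ

/-- The relation `⪯` (on the first components of members of `Ĩ_E^d`). -/
def Preceq (a l : ℕ → ℝ) : Prop :=
  ∃ (N₁ : ℕ) (f : ℕ → ℕ), ∀ n ≥ N₁, a n = l (f n)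

/-- `(l, m)` is a universal element of `Ĩ_E^d`. -/
def UnivElem (E : Set ℝ) (l m : ℕ → ℝ) : Prop :=
  IEd E l m ∧ ∀ a b : ℕ → ℝ, IEd E a b → Preceq a l

/-- The quantity `M(L̃) = limsup lₙ / m_{n+1}`, valued in `[0,∞]`. -/
noncomputable def MQ (l m : ℕ → ℝ) : ℝ≥0∞ :=
  Filter.limsup (fun n => ENNReal.ofReal (l n / m (n + 1))) atTop

/-- The quantity `C(τ̃)`, valued in `[0,∞]` (inf of the empty set is `∞`). -/
noncomputable def Ctau (E : Set ℝ) (τ : ℕ → ℝ) : ℝ≥0∞ :=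
  sInf {v | ∃ a b : ℕ → ℝ, IEd E a b ∧ (∀ᶠ n in atTop, τ n ≤ a n) ∧
    v = Filter.limsup (fun n => ENNReal.ofReal (a n / τ n)) atTop}

/-- The quantity `C_E`, valued in `[0,∞]`. -/
noncomputable def CE (E : Set ℝ) : ℝ≥0∞ :=
  sSup {v | ∃ τ ∈ E0d E, v = Ctau E τ}

/-- The distance set `S_p(X) = {d(x,p) : x ∈ X}`. -/
def SpSet (X : Type*) [MetricSpace X] (p : X) : Set ℝ := {t | ∃ x : X, t = dist x p}

/-- `R*_n(X,p)`: the supremum, over normal scaling sequences `r` and sequences `x` in `X`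
for which the finite limit `lim d(xₙ,p)/rₙ` exists, of this limit, in `[0,∞]`
(sup of the empty set is `0`). -/
noncomputable def RstarN (X : Type*) [MetricSpace X] (p : X) : ℝ≥0∞ :=
  sSup {v | ∃ (r : ℕ → ℝ) (x : ℕ → X) (L : ℝ), NormalScaling p r ∧
    Tendsto (fun n => dist (x n) p / r n) atTop (𝓝 L) ∧ v = ENNReal.ofReal L}

/-- `Rⁿ_*(X,p)`: the corresponding infimum over strictly positive such limits, in `[0,∞]`
(inf of the empty set is `∞`). -/
noncomputable def RlowN (X : Type*) [MetricSpace X] (p : X) : ℝ≥0∞ :=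
  sInf {v | ∃ (r : ℕ → ℝ) (x : ℕ → X) (L : ℝ), NormalScaling p r ∧
    Tendsto (fun n => dist (x n) p / r n) atTop (𝓝 L) ∧ 0 < L ∧ v = ENNReal.ofReal L}

/-- `λ(E,0,h)`: the length of the largest open subinterval of `(0,h)` containing
no point of `E`. -/
noncomputable def lamE (E : Set ℝ) (h : ℝ) : ℝ :=
  sSup {d | ∃ a b : ℝ, 0 ≤ a ∧ a ≤ b ∧ b ≤ h ∧ Ioo a b ∩ E = ∅ ∧ d = b - a}

/-- `E` is strongly porous at `0`: the right upper porosity `p⁺(E,0)` equals `1`. -/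
def StronglyPorousAtZero (E : Set ℝ) : Prop :=
  Filter.limsup (fun h => lamE E h / h) (𝓝[>] (0 : ℝ)) = 1

private lemma aux_tendsto_of_abs_sub_le {f : ℕ → ℝ} {a : ℝ} {ε : ℕ → ℝ}
    (h : ∀ k, |f k - a| ≤ ε k) (hε : Tendsto ε atTop (𝓝 (0 : ℝ))) :
    Tendsto f atTop (𝓝 a) := by
  have h0 : Tendsto (fun k => f k - a) atTop (𝓝 (0 : ℝ)) :=
    squeeze_zero_norm (by simpa [Real.norm_eq_abs] using h) hε
  have h1 := h0.add_const a
  simpa using h1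

private lemma aux_one_div_tendsto : Tendsto (fun k : ℕ => 1 / ((k : ℝ) + 1)) atTop (𝓝 (0 : ℝ)) :=
  tendsto_one_div_add_atTop_nhds_zero_nat

/-- If a normal scaling sequence exists and `R*_n(X,p) < ∞`, then there
is a pretangent space with normal scaling sequence realizing the supremum, i.e. a normal
scaling sequence `r` and a maximal self-stable family `F ∋ p̃` with
`sup { lim d(xₙ,p)/rₙ : x ∈ F } = R*_n(X,p)`. -/
theorem stmt_14 {X : Type*} [MetricSpace X] (p : X)
    (hn : ∃ r : ℕ → ℝ, NormalScaling p r) (hfin : RstarN X p < ⊤) :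
    ∃ (r : ℕ → ℝ) (F : Set (ℕ → X)), NormalScaling p r ∧ MaxSelfStable r F ∧
      (fun _ => p) ∈ F ∧
      sSup {v | ∃ x ∈ F, ∃ L : ℝ,
          Tendsto (fun n => dist (x n) p / r n) atTop (𝓝 L) ∧ v = ENNReal.ofReal L}
        = RstarN X p := by
  classical
  set R : ℝ := (RstarN X p).toReal with hRdef
  have hRofReal : ENNReal.ofReal R = RstarN X p := ENNReal.ofReal_toReal hfin.ne
  -- 1 ≤ R
  have hone : ENNReal.ofReal 1 ≤ RstarN X p := by
    obtain ⟨r0, hr0⟩ := hn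
    obtain ⟨y0, hy0⟩ := hr0.2.2
    rw [RstarN]
    exact le_sSup ⟨r0, y0, 1, hr0, hy0, rfl⟩
  have h1R : (1 : ℝ) ≤ R := by
    have := ENNReal.toReal_mono hfin.ne hone
    simpa using this
  have hR0 : (0 : ℝ) < R := lt_of_lt_of_le one_pos h1R
  -- choose near-optimal normal scaling sequences
  have hex : ∀ k : ℕ, ∃ (rk : ℕ → ℝ) (xk yk : ℕ → X) (Lk : ℝ), ScalingSeq rk ∧
      Tendsto (fun n => dist (xk n) p / rk n) atTop (𝓝 Lk) ∧
      Tendsto (fun n => dist (yk n) p / rk n) atTop (𝓝 (1 : ℝ)) ∧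
      R - 1 / ((k : ℝ) + 1) < Lk ∧ Lk ≤ R := by
    intro k
    have hek : (0 : ℝ) < 1 / ((k : ℝ) + 1) := by positivity
    have hek1 : 1 / ((k : ℝ) + 1) ≤ 1 := by
      rw [div_le_one (by positivity)]
      have : (0 : ℝ) ≤ (k : ℝ) := Nat.cast_nonneg k
      linarith
    have hlt : ENNReal.ofReal (R - 1 / ((k : ℝ) + 1)) < RstarN X p := by
      rw [← hRofReal]
      exact (ENNReal.ofReal_lt_ofReal_iff hR0).2 (by linarith)
    rw [RstarN] at hlt
    obtain ⟨v, hv, hvlt⟩ := lt_sSup_iff.mp hlt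
    obtain ⟨rk, xk, Lk, hNorm, hT, rfl⟩ := hv
    obtain ⟨hscal, hdecr, yk, hyT⟩ := hNorm
    refine ⟨rk, xk, yk, Lk, hscal, hT, hyT, ?_, ?_⟩
    · exact (ENNReal.ofReal_lt_ofReal_iff_of_nonneg (by linarith)).1 hvlt
    · have hle : ENNReal.ofReal Lk ≤ RstarN X p := by
        rw [RstarN]
        exact le_sSup ⟨rk, xk, Lk, ⟨hscal, hdecr, yk, hyT⟩, hT, rfl⟩
      rw [← hRofReal] at hle
      exact (ENNReal.ofReal_le_ofReal_iff hR0.le).1 hle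
  choose r x y L hscal hxT hyT hLlo hLhi using hex
  -- for each k and each positive bound, a good index exists
  have key : ∀ (k : ℕ) (c : ℝ), 0 < c → ∃ n : ℕ,
      |dist (x k n) p / r k n - L k| < 1 / ((k : ℝ) + 1) ∧
      |dist (y k n) p / r k n - 1| < 1 / ((k : ℝ) + 1) ∧ r k n < c := by
    intro k c hc
    have hek : (0 : ℝ) < 1 / ((k : ℝ) + 1) := by positivity
    have e1 := (hxT k).eventually (eventually_abs_sub_lt (L k) hek)
    have e2 := (hyT k).eventually (eventually_abs_sub_lt 1 hek)
    have e3 := (hscal k).2.eventually_lt_const hc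
    exact (e1.and (e2.and e3)).exists
  choose sel hsel using key
  -- a total (proof-free) selection function
  have hex2 : ∃ sel' : ℕ → ℝ → ℕ, ∀ (k : ℕ) (c : ℝ) (hc : 0 < c),
      |dist (x k (sel' k c)) p / r k (sel' k c) - L k| < 1 / ((k : ℝ) + 1) ∧
      |dist (y k (sel' k c)) p / r k (sel' k c) - 1| < 1 / ((k : ℝ) + 1) ∧
      r k (sel' k c) < c := by
    refine ⟨fun k c => if hc : 0 < c then sel k c hc else 0, fun k c hc => ?_⟩
    simp only [dif_pos hc]
    exact hsel k c hc
  obtain ⟨sel', hsel'⟩ := hex2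
  -- the recursive diagonal choice
  obtain ⟨g, hg0, hgs⟩ : ∃ g : ℕ → ℕ, g 0 = sel' 0 1 ∧
      ∀ m : ℕ, g (m + 1) = sel' (m + 1) (min (1 / ((m : ℝ) + 2)) (r m (g m))) :=
    ⟨fun k => Nat.rec (sel' 0 1)
      (fun m gm => sel' (m + 1) (min (1 / ((m : ℝ) + 2)) (r m gm))) k, rfl, fun _ => rfl⟩
  have hA : ∀ k : ℕ,
      |dist (x k (g k)) p / r k (g k) - L k| < 1 / ((k : ℝ) + 1) ∧
      |dist (y k (g k)) p / r k (g k) - 1| < 1 / ((k : ℝ) + 1) ∧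
      r k (g k) < 1 / ((k : ℝ) + 1) := by
    intro k
    cases k with
    | zero =>
        rw [hg0]
        have h := hsel' 0 1 one_pos
        refine ⟨h.1, h.2.1, ?_⟩
        simpa using h.2.2
    | succ m =>
        rw [hgs m]
        have hcpos : (0 : ℝ) < min (1 / ((m : ℝ) + 2)) (r m (g m)) :=
          lt_min (by positivity) ((hscal m).1 (g m))
        have h := hsel' (m + 1) (min (1 / ((m : ℝ) + 2)) (r m (g m))) hcpos
        refine ⟨h.1, h.2.1, ?_⟩
        have hcast : 1 / ((m : ℝ) + 2) = 1 / (((m + 1 : ℕ) : ℝ) + 1) := by push_cast; ring_nf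
        exact lt_of_lt_of_le h.2.2 ((min_le_left _ _).trans (le_of_eq hcast))
  have hdec : ∀ k : ℕ, r (k + 1) (g (k + 1)) < r k (g k) := by
    intro k
    rw [hgs k]
    have hcpos : (0 : ℝ) < min (1 / ((k : ℝ) + 2)) (r k (g k)) :=
      lt_min (by positivity) ((hscal k).1 (g k))
    exact lt_of_lt_of_le (hsel' (k + 1) _ hcpos).2.2 (min_le_right _ _)
  -- the diagonal sequences
  set r' : ℕ → ℝ := fun k => r k (g k) with hr'def
  set x' : ℕ → X := fun k => x k (g k) with hx'def
  set y' : ℕ → X := fun k => y k (g k) with hy'def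
  have hr'pos : ∀ k, 0 < r' k := fun k => (hscal k).1 (g k)
  have hr'0 : Tendsto r' atTop (𝓝 (0 : ℝ)) :=
    squeeze_zero (fun k => (hr'pos k).le) (fun k => ((hA k).2.2).le) aux_one_div_tendsto
  have htends_y : Tendsto (fun k => dist (y' k) p / r' k) atTop (𝓝 (1 : ℝ)) :=
    aux_tendsto_of_abs_sub_le (fun k => ((hA k).2.1).le) aux_one_div_tendsto
  have htends_x : Tendsto (fun k => dist (x' k) p / r' k) atTop (𝓝 R) := by
    refine aux_tendsto_of_abs_sub_le (ε := fun k => 2 / ((k : ℝ) + 1)) (fun k => ?_) ?_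
    · have h1 := (hA k).1
      have h2 : |L k - R| ≤ 1 / ((k : ℝ) + 1) := by
        rw [abs_of_nonpos (by linarith [hLhi k])]
        have := hLlo k
        linarith
      have h3 := abs_sub_le (dist (x' k) p / r' k) (L k) R
      have : 1 / ((k : ℝ) + 1) + 1 / ((k : ℝ) + 1) = 2 / ((k : ℝ) + 1) := by ring
      linarith
    · have h := aux_one_div_tendsto.const_mul (2 : ℝ)
      simpa only [mul_one_div, mul_zero] using h
  have hnorm' : NormalScaling p r' :=
    ⟨⟨hr'pos, hr'0⟩, Filter.Eventually.of_forall (fun k => (hdec k).le), y', htends_y⟩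
  -- the base self-stable family
  have hstab_pp : MutuallyStable r' (fun _ => p) (fun _ => p) :=
    ⟨0, by simpa [dist_self] using (tendsto_const_nhds : Tendsto (fun _ : ℕ => (0 : ℝ)) atTop (𝓝 0))⟩
  have hstab_xx : MutuallyStable r' x' x' :=
    ⟨0, by simpa [dist_self] using (tendsto_const_nhds : Tendsto (fun _ : ℕ => (0 : ℝ)) atTop (𝓝 0))⟩
  have hstab_xp : MutuallyStable r' x' (fun _ => p) := ⟨R, htends_x⟩
  have hstab_px : MutuallyStable r' (fun _ => p) x' :=
    ⟨R, by simpa [dist_comm] using htends_x⟩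
  have hF0 : SelfStable r' ({(fun _ => p), x'} : Set (ℕ → X)) := by
    intro a ha b hb
    rcases ha with ha | ha <;> rcases hb with hb | hb <;>
      simp only [Set.mem_singleton_iff] at * <;> subst ha <;> subst hb
    · exact hstab_pp
    · exact hstab_px
    · exact hstab_xp
    · exact hstab_xx
  -- Zorn's lemma
  obtain ⟨F, hF0F, hFmax⟩ := zorn_subset_nonempty {G : Set (ℕ → X) | SelfStable r' G}
    (fun c hcS hchain hne => by
      refine ⟨⋃₀ c, ?_, fun s hs => subset_sUnion_of_mem hs⟩
      intro a ha b hb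
      obtain ⟨s, hs, has⟩ := ha
      obtain ⟨t, ht, hbt⟩ := hb
      rcases hchain.total hs ht with h | h
      · exact hcS ht a (h has) b hbt
      · exact hcS hs a has b (h hbt))
    _ hF0
  have hpF : (fun _ => p) ∈ F := hF0F (Set.mem_insert _ _)
  have hxF : x' ∈ F := hF0F (Set.mem_insert_of_mem _ rfl)
  refine ⟨r', F, hnorm', ⟨hFmax.1, fun G hG hFG => le_antisymm (hFmax.2 hG hFG) hFG⟩, hpF, ?_⟩
  apply le_antisymm
  · apply sSup_le
    rintro v ⟨xx, hxx, Lx, hT, rfl⟩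
    rw [RstarN]
    exact le_sSup ⟨r', xx, Lx, hnorm', hT, rfl⟩
  · rw [← hRofReal]
    exact le_sSup ⟨x', hxF, R, htends_x, rfl⟩
end

section
/- Let (X,d,p) be a pointed metric space such that there exists a normal scaling sequence for (X,d,p). Then R^n_*(X,p) > 0 if and only if R*_n(X,p) < ∞ (i.e., the family of pretangent spaces to X at p with normal scaling sequences is uniformly discrete if and only if it is uniformly bounded). Moreover, if R*_n(X,p) < ∞, then R^n_*(X,p) = 1/R*_n(X,p). -/
open Filter Topology Set
open scoped ENNReal

/-- Key inversion lemma: from a normal scaling realizing limit `L > 0`,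
rescaling produces a normal scaling realizing limit `L⁻¹`. -/
lemma invert_limit {X : Type*} [MetricSpace X] (p : X) (r : ℕ → ℝ) (x : ℕ → X) (L : ℝ)
    (hr : NormalScaling p r)
    (hx : Tendsto (fun n => dist (x n) p / r n) atTop (𝓝 L)) (hL : 0 < L) :
    ∃ (r' : ℕ → ℝ) (x' : ℕ → X), NormalScaling p r' ∧
      Tendsto (fun n => dist (x' n) p / r' n) atTop (𝓝 L⁻¹) := by
  obtain ⟨⟨hpos, hto0⟩, hdec, x₀, hx₀⟩ := hr
  have key : ∀ (y : ℕ → X), (fun n => dist (y n) p / (L * r n))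
      = fun n => (dist (y n) p / r n) / L := by
    intro y; funext n; rw [div_div, mul_comm]
  refine ⟨fun n => L * r n, x₀, ⟨⟨fun n => mul_pos hL (hpos n), ?_⟩, ?_, x, ?_⟩, ?_⟩
  · simpa using hto0.const_mul L
  · exact hdec.mono fun n h => mul_le_mul_of_nonneg_left h hL.le
  · rw [key]
    simpa [div_self hL.ne'] using hx.div_const L
  · rw [key]
    simpa [one_div] using hx₀.div_const L

/-- If a normal scaling sequence exists, then `Rⁿ_*(X,p) > 0` iff
`R*_n(X,p) < ∞`; moreover if `R*_n(X,p) < ∞` then `Rⁿ_*(X,p) = 1 / R*_n(X,p)`. -/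
theorem stmt_15 {X : Type*} [MetricSpace X] (p : X)
    (hn : ∃ r : ℕ → ℝ, NormalScaling p r) :
    (0 < RlowN X p ↔ RstarN X p < ⊤) ∧
    (RstarN X p < ⊤ → RlowN X p = 1 / RstarN X p) := by
  obtain ⟨r₀, hr₀⟩ := hn
  obtain ⟨_, _, x₀, hx₀⟩ := id hr₀
  have mem1A : (1 : ℝ≥0∞) ∈ {v | ∃ (r : ℕ → ℝ) (x : ℕ → X) (L : ℝ), NormalScaling p r ∧
      Tendsto (fun n => dist (x n) p / r n) atTop (𝓝 L) ∧ v = ENNReal.ofReal L} :=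
    ⟨r₀, x₀, 1, hr₀, hx₀, by simp⟩
  have mem1B : (1 : ℝ≥0∞) ∈ {v | ∃ (r : ℕ → ℝ) (x : ℕ → X) (L : ℝ), NormalScaling p r ∧
      Tendsto (fun n => dist (x n) p / r n) atTop (𝓝 L) ∧ 0 < L ∧ v = ENNReal.ofReal L} :=
    ⟨r₀, x₀, 1, hr₀, hx₀, one_pos, by simp⟩
  have h1star : (1 : ℝ≥0∞) ≤ RstarN X p := le_sSup mem1A
  -- RstarN⁻¹ ≤ RlowN
  have hge : (RstarN X p)⁻¹ ≤ RlowN X p := by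
    refine le_sInf ?_
    rintro v ⟨r, x, L, hr, hx, hL, rfl⟩
    obtain ⟨r', x', hr', hx'⟩ := invert_limit p r x L hr hx hL
    have hmem : ENNReal.ofReal L⁻¹ ≤ RstarN X p := le_sSup ⟨r', x', L⁻¹, hr', hx', rfl⟩
    rw [ENNReal.ofReal_inv_of_pos hL] at hmem
    calc (RstarN X p)⁻¹ ≤ ((ENNReal.ofReal L)⁻¹)⁻¹ := ENNReal.inv_le_inv.2 hmem
    _ = ENNReal.ofReal L := inv_inv _
  -- RlowN ≤ RstarN⁻¹
  have hle : RlowN X p ≤ (RstarN X p)⁻¹ := by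
    rw [← inv_inv (RlowN X p)]
    refine ENNReal.inv_le_inv.2 (sSup_le ?_)
    rintro v ⟨r, x, L, hr, hx, rfl⟩
    rcases le_or_gt L 0 with hL | hL
    · simp [ENNReal.ofReal_of_nonpos hL]
    · obtain ⟨r', x', hr', hx'⟩ := invert_limit p r x L hr hx hL
      have hmem : RlowN X p ≤ ENNReal.ofReal L⁻¹ :=
        sInf_le ⟨r', x', L⁻¹, hr', hx', inv_pos.2 hL, rfl⟩
      rw [ENNReal.ofReal_inv_of_pos hL] at hmem
      calc ENNReal.ofReal L = ((ENNReal.ofReal L)⁻¹)⁻¹ := (inv_inv _).symm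
      _ ≤ (RlowN X p)⁻¹ := ENNReal.inv_le_inv.2 hmem
  have heq : RlowN X p = (RstarN X p)⁻¹ := le_antisymm hle hge
  constructor
  · rw [heq, ENNReal.inv_pos, lt_top_iff_ne_top]
  · intro _
    rw [heq, one_div]
end

section
/- Let I be a nonempty index set and let 𝔉 = {(X_i, d_i, p_i) : i ∈ I} be a weakly self-similar family of pointed metric spaces such that the sphere S_i = {x ∈ X_i : d_i(x,p_i) = 1} is nonempty for every i ∈ I. Then R*(𝔉) < ∞ if and only if R_*(𝔉) > 0 (i.e., 𝔉 is uniformly bounded if and only if it is uniformly discrete w.r.t. the marked points). Moreover, if R*(𝔉) < ∞, then R_*(𝔉) = 1/R*(𝔉). -/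
open Filter Topology Set
open scoped ENNReal

/-- `ρ*(X_i)`: the supremum of distances from the marked point, in `[0,∞]`. -/
noncomputable def rhoSup {Y : Type*} [MetricSpace Y] (q : Y) : ℝ≥0∞ :=
  ⨆ y : Y, edist y q

/-- `ρ_*(X_i)`: the infimum of distances from the marked point over points distinct
from it (`∞` if there are none), in `[0,∞]`. -/
noncomputable def rhoInf {Y : Type*} [MetricSpace Y] (q : Y) : ℝ≥0∞ :=
  ⨅ y : {z : Y // z ≠ q}, edist y.1 q

/-- A weakly self-similar family of pointed metric spaces with all unit
spheres nonempty is uniformly bounded iff it is uniformly discrete; moreover, if it is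
uniformly bounded then `R_*(𝔉) = 1 / R*(𝔉)`. -/
theorem stmt_16 {I : Type*} [Nonempty I] (X : I → Type*) [∀ i, MetricSpace (X i)]
    (p : ∀ i, X i)
    (hss : ∀ i : I, ∀ t : ℝ, t ≠ 0 → (∃ x : X i, t = dist x (p i)) →
      ∃ (j : I) (f : X i → X j), Function.Bijective f ∧ f (p i) = p j ∧
        ∀ x y : X i, dist (f x) (f y) = dist x y / t)
    (hsph : ∀ i : I, ∃ x : X i, dist x (p i) = 1) :
    ((⨆ i, rhoSup (p i)) < ⊤ ↔ 0 < ⨅ i, rhoInf (p i)) ∧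
    ((⨆ i, rhoSup (p i)) < ⊤ → (⨅ i, rhoInf (p i)) = 1 / ⨆ i, rhoSup (p i)) := by
  -- Abbreviations
  set S := ⨆ i, rhoSup (p i) with hS
  set T := ⨅ i, rhoInf (p i) with hT
  -- Lemma A: each rhoSup is at least 1
  have hA : ∀ i, (1 : ℝ≥0∞) ≤ rhoSup (p i) := by
    intro i
    obtain ⟨x, hx⟩ := hsph i
    have : (1 : ℝ≥0∞) = edist x (p i) := by
      rw [edist_dist, hx]; simp
    rw [this]
    exact le_iSup (fun y => edist y (p i)) x
  have hS1 : (1 : ℝ≥0∞) ≤ S := le_trans (hA (Classical.arbitrary I)) (le_iSup (fun i => rhoSup (p i)) (Classical.arbitrary I))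
  have hSne0 : S ≠ 0 := by intro h; rw [h] at hS1; exact absurd hS1 (by simp)
  -- Lemma B: rescaling sends the unit sphere point close to the marked point
  have hB : ∀ i (y : X i), y ≠ p i → ∃ j, rhoInf (p j) ≤ (edist y (p i))⁻¹ := by
    intro i y hy
    have htpos : 0 < dist y (p i) := dist_pos.mpr hy
    obtain ⟨j, f, hfbij, hfp, hfd⟩ := hss i (dist y (p i)) (ne_of_gt htpos) ⟨y, rfl⟩
    obtain ⟨s, hs⟩ := hsph i
    have hsne : s ≠ p i := by
      intro h; rw [h] at hs; simp at hs
    have hfs : f s ≠ p j := by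
      rw [← hfp]; exact fun h => hsne (hfbij.1 h)
    refine ⟨j, ?_⟩
    have h1 : rhoInf (p j) ≤ edist (f s) (p j) :=
      iInf_le (fun z : {z : X j // z ≠ p j} => edist z.1 (p j)) ⟨f s, hfs⟩
    have h2 : edist (f s) (p j) = (edist y (p i))⁻¹ := by
      rw [edist_dist, edist_dist, ← hfp, hfd s (p i), hs,
        ← ENNReal.ofReal_inv_of_pos htpos, one_div]
    rwa [h2] at h1
  -- Main lemma 1: S ≤ T⁻¹ (always)
  have hM1 : S ≤ T⁻¹ := by
    refine iSup_le fun i => iSup_le fun x => ?_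
    by_cases hx : x = p i
    · simp [hx]
    · obtain ⟨j, hj⟩ := hB i x hx
      have hT' : T ≤ (edist x (p i))⁻¹ := le_trans (iInf_le _ j) hj
      have := ENNReal.inv_le_inv.mpr hT'
      rwa [inv_inv] at this
  -- Lemma C: rhoSup scales
  have hC : ∀ i (y : X i), y ≠ p i → rhoSup (p i) ≤ edist y (p i) * S := by
    intro i y hy
    have htpos : 0 < dist y (p i) := dist_pos.mpr hy
    obtain ⟨j, f, hfbij, hfp, hfd⟩ := hss i (dist y (p i)) (ne_of_gt htpos) ⟨y, rfl⟩
    refine iSup_le fun x => ?_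
    have hkey : edist x (p i) = edist y (p i) * edist (f x) (p j) := by
      rw [edist_dist, edist_dist, edist_dist, ← hfp, hfd x (p i),
        ← ENNReal.ofReal_mul (le_of_lt htpos)]
      congr 1
      field_simp
    rw [hkey]
    refine mul_le_mul_right ?_ _
    exact le_trans (le_iSup (fun z => edist z (p j)) (f x)) (le_iSup (fun k => rhoSup (p k)) j)
  -- Main lemma 2: if S < ⊤ then S⁻¹ ≤ T
  have hM2 : S < ⊤ → S⁻¹ ≤ T := by
    intro hStop
    refine le_iInf fun i => le_iInf fun y => ?_
    obtain ⟨y, hy⟩ := y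
    have h1 : (1 : ℝ≥0∞) ≤ edist y (p i) * S := le_trans (hA i) (hC i y hy)
    have h2 : S⁻¹ * 1 ≤ S⁻¹ * (edist y (p i) * S) := mul_le_mul_right h1 _
    calc S⁻¹ = S⁻¹ * 1 := (mul_one _).symm
      _ ≤ S⁻¹ * (edist y (p i) * S) := h2
      _ = edist y (p i) * (S⁻¹ * S) := by ring
      _ = edist y (p i) := by
          rw [ENNReal.inv_mul_cancel hSne0 (ne_of_lt hStop), mul_one]
  constructor
  · constructor
    · intro hStop
      have := hM2 hStop
      have hpos : (0 : ℝ≥0∞) < S⁻¹ := ENNReal.inv_pos.mpr (ne_of_lt hStop)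
      exact lt_of_lt_of_le hpos this
    · intro hTpos
      have hTinv : T⁻¹ < ⊤ := ENNReal.inv_lt_top.mpr hTpos
      exact lt_of_le_of_lt hM1 hTinv
  · intro hStop
    rw [one_div]
    refine le_antisymm ?_ (hM2 hStop)
    have := ENNReal.inv_le_inv.mpr hM1
    rwa [inv_inv] at this
end

section
/- Let (X,d,p) be a pointed metric space. For a maximal self-stable (w.r.t. a scaling sequence (r_n)) family F with p̃ ∈ F, write ρ*(F) := sup{ d̃(x̃,p̃) : x̃ ∈ F } and ρ_*(F) := inf{ d̃(x̃,p̃) : x̃ ∈ F, d̃(x̃,p̃) > 0 } (∞ if there is no such x̃). Then: (a) if (r_n) is a normal scaling sequence for (X,d,p) and F is a maximal self-stable family w.r.t. (r_n) with p̃ ∈ F, then there exist a strictly increasing sequence (n_k) of natural numbers and a maximal self-stable family G w.r.t. the scaling sequence (r_{n_k})_k with p̃ ∈ G, containing some sequence c̃ with d̃(c̃,p̃) = 1, such that ρ_*(G) ≤ ρ_*(F) ≤ ρ*(F) ≤ ρ*(G); (b) conversely, if (r_n) is any scaling sequence and F is a maximal self-stable family w.r.t. (r_n) with p̃ ∈ F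 containing some sequence c̃ with d̃(c̃,p̃) = 1, then there exist a normal scaling sequence (μ_n) and a maximal self-stable family G w.r.t. (μ_n) with p̃ ∈ G such that ρ_*(G) ≤ ρ_*(F) ≤ ρ*(F) ≤ ρ*(G). -/
open Filter Topology Set
open scoped ENNReal

/-- `ρ*(F)`: the supremum of the limits `d̃(x̃,p̃)` over `x̃ ∈ F`, in `[0,∞]`. -/
noncomputable def rhoFSup {X : Type*} [MetricSpace X] (p : X) (r : ℕ → ℝ)
    (F : Set (ℕ → X)) : ℝ≥0∞ :=
  sSup {v | ∃ x ∈ F, ∃ L : ℝ,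
    Tendsto (fun n => dist (x n) p / r n) atTop (𝓝 L) ∧ v = ENNReal.ofReal L}

/-- `ρ_*(F)`: the infimum of the strictly positive limits `d̃(x̃,p̃)` over `x̃ ∈ F`,
in `[0,∞]` (`∞` if there are none). -/
noncomputable def rhoFInf {X : Type*} [MetricSpace X] (p : X) (r : ℕ → ℝ)
    (F : Set (ℕ → X)) : ℝ≥0∞ :=
  sInf {v | ∃ x ∈ F, ∃ L : ℝ,
    Tendsto (fun n => dist (x n) p / r n) atTop (𝓝 L) ∧ 0 < L ∧ v = ENNReal.ofReal L}

section Aux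

variable {X : Type*} [MetricSpace X]

private lemma exists_maxSelfStable (r : ℕ → ℝ) (F₀ : Set (ℕ → X)) (h : SelfStable r F₀) :
    ∃ G, MaxSelfStable r G ∧ F₀ ⊆ G := by
  have hzorn : ∀ c ⊆ {G : Set (ℕ → X) | SelfStable r G}, IsChain (· ⊆ ·) c → c.Nonempty →
      ∃ ub ∈ {G : Set (ℕ → X) | SelfStable r G}, ∀ s ∈ c, s ⊆ ub := by
    intro c hc hchain hne
    refine ⟨⋃₀ c, ?_, fun s hs => subset_sUnion_of_mem hs⟩
    rintro x ⟨s, hs, hxs⟩ y ⟨t, ht, hyt⟩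
    rcases hchain.total hs ht with h' | h'
    · exact hc ht x (h' hxs) y hyt
    · exact hc hs x hxs y (h' hyt)
  obtain ⟨m, hsub, hmax⟩ :=
    zorn_subset_nonempty {G : Set (ℕ → X) | SelfStable r G} hzorn F₀ h
  exact ⟨m, ⟨hmax.prop,
    fun G hG hsub' => subset_antisymm (hmax.2 hG hsub') hsub'⟩, hsub⟩

private lemma exists_subseq_forall_tendsto (g : ℕ × ℕ → ℕ → ℝ)
    (hb : ∀ q, ∃ B, ∀ n, g q n ∈ Icc (0 : ℝ) B) :
    ∃ φ : ℕ → ℕ, StrictMono φ ∧ ∀ q, ∃ L, Tendsto (fun k => g q (φ k)) atTop (𝓝 L) := by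
  choose B hB using hb
  have hs : IsCompact (Set.pi univ fun q : ℕ × ℕ => Icc (0 : ℝ) (B q)) :=
    isCompact_univ_pi fun q => isCompact_Icc
  obtain ⟨a, -, φ, hφ, ha⟩ := hs.tendsto_subseq (x := fun n q => g q n)
    (fun n q _ => hB q n)
  exact ⟨φ, hφ, fun q => ⟨a q, tendsto_pi_nhds.mp ha q⟩⟩

private lemma exists_subseq_antitone {r : ℕ → ℝ} (hr : ScalingSeq r) :
    ∃ ψ : ℕ → ℕ, StrictMono ψ ∧ Antitone (fun k => r (ψ k)) := by
  have key : ∀ n : ℕ, ∃ m, n < m ∧ r m ≤ r n := by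
    intro n
    obtain ⟨m, hm1, hm2⟩ := ((hr.2.eventually_lt_const (hr.1 n)).and
      (eventually_gt_atTop n)).exists
    exact ⟨m, hm2, hm1.le⟩
  choose f hf1 hf2 using key
  refine ⟨fun k => Nat.rec 0 (fun _ prev => f prev) k, ?_, ?_⟩
  · exact strictMono_nat_of_lt_succ fun k => hf1 _
  · exact antitone_nat_of_succ_le fun k => hf2 _

/-- The interleaving family used in the proof. -/
private noncomputable def interleave (c pp : ℕ → X) (xs ys : ℕ → ℕ → X) : ℕ → ℕ → X :=
  fun i => if i = 0 then c else if i = 1 then pp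
    else if Even (i - 2) then xs ((i - 2) / 2) else ys ((i - 2) / 2)

private lemma interleave_zero (c pp : ℕ → X) (xs ys : ℕ → ℕ → X) :
    interleave c pp xs ys 0 = c := rfl

private lemma interleave_one (c pp : ℕ → X) (xs ys : ℕ → ℕ → X) :
    interleave c pp xs ys 1 = pp := rfl

private lemma interleave_xs (c pp : ℕ → X) (xs ys : ℕ → ℕ → X) (j : ℕ) :
    interleave c pp xs ys (2 * j + 2) = xs j := by
  have h1 : 2 * j + 2 ≠ 0 := by omega
  have h2 : 2 * j + 2 ≠ 1 := by omega
  have h3 : (2 * j + 2) - 2 = 2 * j := by omega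
  have h4 : Even (2 * j) := even_two_mul j
  have h5 : 2 * j / 2 = j := by omega
  simp only [interleave, if_neg h1, if_neg h2, h3, if_pos h4, h5]

private lemma interleave_ys (c pp : ℕ → X) (xs ys : ℕ → ℕ → X) (j : ℕ) :
    interleave c pp xs ys (2 * j + 3) = ys j := by
  have h1 : 2 * j + 3 ≠ 0 := by omega
  have h2 : 2 * j + 3 ≠ 1 := by omega
  have h3 : (2 * j + 3) - 2 = 2 * j + 1 := by omega
  have h4 : ¬ Even (2 * j + 1) := by simp [Nat.even_add_one, even_two_mul j, parity_simps]
  have h5 : (2 * j + 1) / 2 = j := by omega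
  simp only [interleave, if_neg h1, if_neg h2, h3, if_neg h4, h5]

private lemma rho_mono_subseq (p : X) (r : ℕ → ℝ) {ψ : ℕ → ℕ} (hψ : StrictMono ψ)
    (F : Set (ℕ → X)) :
    rhoFInf p (fun k => r (ψ k)) ((fun y => fun k => y (ψ k)) '' F) ≤ rhoFInf p r F ∧
      rhoFSup p r F ≤ rhoFSup p (fun k => r (ψ k)) ((fun y => fun k => y (ψ k)) '' F) := by
  constructor
  · refine sInf_le_sInf ?_
    rintro v ⟨x, hxF, L, hL, hLpos, rfl⟩
    refine ⟨fun k => x (ψ k), ⟨x, hxF, rfl⟩, L, ?_, hLpos, rfl⟩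
    exact hL.comp hψ.tendsto_atTop
  · refine sSup_le_sSup ?_
    rintro v ⟨x, hxF, L, hL, rfl⟩
    refine ⟨fun k => x (ψ k), ⟨x, hxF, rfl⟩, L, ?_, rfl⟩
    exact hL.comp hψ.tendsto_atTop

/-- Core construction: from a self-stable family with `p̃` we extract a subsequence and a
maximal self-stable family containing an element at distance `1`, with the `ρ` bounds. -/
private lemma core (p : X) (r : ℕ → ℝ) (hr : ScalingSeq r) (F : Set (ℕ → X))
    (hF : SelfStable r F) (hpF : (fun _ => p) ∈ F)
    (c : ℕ → X) (hc : Tendsto (fun n => dist (c n) p / r n) atTop (𝓝 (1 : ℝ)))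
    (hpos : ∃ y ∈ F, ∃ L : ℝ, 0 < L ∧
      Tendsto (fun n => dist (y n) p / r n) atTop (𝓝 L)) :
    ∃ φ : ℕ → ℕ, StrictMono φ ∧ ∃ G : Set (ℕ → X),
      MaxSelfStable (fun k => r (φ k)) G ∧ (fun _ => p) ∈ G ∧
      (∃ c' ∈ G, Tendsto (fun k => dist (c' k) p / r (φ k)) atTop (𝓝 (1 : ℝ))) ∧
      rhoFInf p (fun k => r (φ k)) G ≤ rhoFInf p r F ∧
      rhoFSup p r F ≤ rhoFSup p (fun k => r (φ k)) G := by
  classical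
  -- the sup set
  set SS : Set ℝ≥0∞ := {v | ∃ x ∈ F, ∃ L : ℝ,
    Tendsto (fun n => dist (x n) p / r n) atTop (𝓝 L) ∧ v = ENNReal.ofReal L} with hSS
  have hSSne : SS.Nonempty := by
    refine ⟨ENNReal.ofReal 0, (fun _ => p), hpF, 0, ?_, rfl⟩
    simpa [dist_self] using (tendsto_const_nhds : Tendsto (fun _ : ℕ => (0:ℝ)) atTop (𝓝 0))
  obtain ⟨us, -, hus, husm⟩ := exists_seq_tendsto_sSup hSSne (OrderTop.bddAbove SS)
  choose xs hxsF Ls hLs husq using husm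
  -- the inf set
  set SI : Set ℝ≥0∞ := {v | ∃ x ∈ F, ∃ L : ℝ,
    Tendsto (fun n => dist (x n) p / r n) atTop (𝓝 L) ∧ 0 < L ∧
      v = ENNReal.ofReal L} with hSI
  have hSIne : SI.Nonempty := by
    obtain ⟨y, hyF, L, hLpos, hL⟩ := hpos
    exact ⟨ENNReal.ofReal L, y, hyF, L, hL, hLpos, rfl⟩
  obtain ⟨vs, -, hvs, hvsm⟩ := exists_seq_tendsto_sInf hSIne (OrderBot.bddBelow SI)
  choose ys hysF Ms hMs hMpos hvsq using hvsm
  -- the interleaved family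
  set T : ℕ → ℕ → X := interleave c (fun _ => p) xs ys with hT
  have hTF : ∀ i, ∃ L : ℝ, Tendsto (fun n => dist (T i n) p / r n) atTop (𝓝 L) := by
    intro i
    match i with
    | 0 => exact ⟨1, by rw [hT, interleave_zero]; exact hc⟩
    | 1 =>
      refine ⟨0, ?_⟩
      rw [hT, interleave_one]
      simpa [dist_self] using (tendsto_const_nhds : Tendsto (fun _ : ℕ => (0:ℝ)) atTop (𝓝 0))
    | (j + 2) =>
      rcases Nat.even_or_odd j with ⟨m, hm⟩ | ⟨m, hm⟩
      · have : j + 2 = 2 * m + 2 := by omega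
        rw [hT, this, interleave_xs]
        exact ⟨Ls m, hLs m⟩
      · have : j + 2 = 2 * m + 3 := by omega
        rw [hT, this, interleave_ys]
        exact ⟨Ms m, hMs m⟩
  choose Li hLi using hTF
  -- boundedness of pairwise ratios
  have hbdd : ∀ q : ℕ × ℕ, ∃ B, ∀ n,
      dist (T q.1 n) (T q.2 n) / r n ∈ Icc (0 : ℝ) B := by
    intro q
    have hsum : Tendsto (fun n => dist (T q.1 n) p / r n + dist (T q.2 n) p / r n)
        atTop (𝓝 (Li q.1 + Li q.2)) := (hLi q.1).add (hLi q.2)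
    obtain ⟨B, hB⟩ := hsum.bddAbove_range
    refine ⟨B, fun n => ⟨div_nonneg dist_nonneg (hr.1 n).le, ?_⟩⟩
    have h1 : dist (T q.1 n) (T q.2 n) ≤ dist (T q.1 n) p + dist (T q.2 n) p :=
      dist_triangle_right _ _ _
    calc dist (T q.1 n) (T q.2 n) / r n
        ≤ (dist (T q.1 n) p + dist (T q.2 n) p) / r n :=
          (div_le_div_iff_of_pos_right (hr.1 n)).mpr h1
      _ = dist (T q.1 n) p / r n + dist (T q.2 n) p / r n := add_div _ _ _
      _ ≤ B := hB ⟨n, rfl⟩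
  obtain ⟨φ, hφ, hconv⟩ := exists_subseq_forall_tendsto
    (fun q n => dist (T q.1 n) (T q.2 n) / r n) hbdd
  -- the seed family and its maximal extension
  set F₀ : Set (ℕ → X) := Set.range (fun i => fun k => T i (φ k)) with hF₀
  have hF₀ss : SelfStable (fun k => r (φ k)) F₀ := by
    rintro x ⟨i, rfl⟩ y ⟨j, rfl⟩
    obtain ⟨L, hL⟩ := hconv (i, j)
    exact ⟨L, hL⟩
  obtain ⟨G, hG, hsub⟩ := exists_maxSelfStable _ _ hF₀ss
  have hmemT : ∀ i, (fun k => T i (φ k)) ∈ G := fun i => hsub ⟨i, rfl⟩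
  refine ⟨φ, hφ, G, hG, ?_, ?_, ?_, ?_⟩
  · -- p̃ ∈ G
    have : (fun k => T 1 (φ k)) = (fun _ : ℕ => p) := by
      funext k; rw [hT, interleave_one]
    exact this ▸ hmemT 1
  · -- c ∘ φ ∈ G with limit 1
    refine ⟨fun k => T 0 (φ k), hmemT 0, ?_⟩
    have : (fun k => T 0 (φ k)) = fun k => c (φ k) := by
      funext k; rw [hT, interleave_zero]
    rw [this]
    exact hc.comp hφ.tendsto_atTop
  · -- inf inequality
    have hFinf : rhoFInf p r F = sInf SI := rfl
    rw [hFinf]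
    refine ge_of_tendsto hvs (Eventually.of_forall fun j => ?_)
    rw [hvsq j]
    refine sInf_le ⟨fun k => ys j (φ k), ?_, Ms j, ?_, hMpos j, rfl⟩
    · have : (fun k => T (2 * j + 3) (φ k)) = fun k => ys j (φ k) := by
        funext k; rw [hT, interleave_ys]
      exact this ▸ hmemT (2 * j + 3)
    · exact (hMs j).comp hφ.tendsto_atTop
  · -- sup inequality
    have hFsup : rhoFSup p r F = sSup SS := rfl
    rw [hFsup]
    refine le_of_tendsto hus (Eventually.of_forall fun j => ?_)
    rw [husq j]
    refine le_sSup ⟨fun k => xs j (φ k), ?_, Ls j, ?_, rfl⟩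
    · have : (fun k => T (2 * j + 2) (φ k)) = fun k => xs j (φ k) := by
        funext k; rw [hT, interleave_xs]
      exact this ▸ hmemT (2 * j + 2)
    · exact (hLs j).comp hφ.tendsto_atTop

end Aux

/-- (a) from a maximal self-stable family over a normal scaling sequence
one can pass to a subsequence and a maximal self-stable family containing an element at
distance `1` from `p̃`, preserving the chain of inequalities; (b) conversely, from a
maximal self-stable family containing an element at distance `1` one can pass to a
normal scaling sequence. -/
theorem stmt_17 {X : Type*} [MetricSpace X] (p : X) :
    (∀ (r : ℕ → ℝ) (F : Set (ℕ → X)), NormalScaling p r → MaxSelfStable r F →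
      (fun _ => p) ∈ F →
      ∃ φ : ℕ → ℕ, StrictMono φ ∧ ∃ G : Set (ℕ → X),
        MaxSelfStable (fun k => r (φ k)) G ∧ (fun _ => p) ∈ G ∧
        (∃ c ∈ G, Tendsto (fun k => dist (c k) p / r (φ k)) atTop (𝓝 (1 : ℝ))) ∧
        rhoFInf p (fun k => r (φ k)) G ≤ rhoFInf p r F ∧
        rhoFInf p r F ≤ rhoFSup p r F ∧
        rhoFSup p r F ≤ rhoFSup p (fun k => r (φ k)) G) ∧
    (∀ (r : ℕ → ℝ) (F : Set (ℕ → X)), ScalingSeq r → MaxSelfStable r F →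
      (fun _ => p) ∈ F →
      (∃ c ∈ F, Tendsto (fun n => dist (c n) p / r n) atTop (𝓝 (1 : ℝ))) →
      ∃ (μ : ℕ → ℝ) (G : Set (ℕ → X)), NormalScaling p μ ∧ MaxSelfStable μ G ∧
        (fun _ => p) ∈ G ∧
        rhoFInf p μ G ≤ rhoFInf p r F ∧
        rhoFInf p r F ≤ rhoFSup p r F ∧
        rhoFSup p r F ≤ rhoFSup p μ G) := by
  classical
  constructor
  · -- part (a)
    rintro r F ⟨hscal, hdecr, x, hx⟩ hF hpF
    -- there is an element of F with a strictly positive limit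
    have hpos : ∃ y ∈ F, ∃ L : ℝ, 0 < L ∧
        Tendsto (fun n => dist (y n) p / r n) atTop (𝓝 L) := by
      by_contra h
      push_neg at h
      have hall0 : ∀ y ∈ F, Tendsto (fun n => dist (y n) p / r n) atTop (𝓝 (0 : ℝ)) := by
        intro y hy
        obtain ⟨L, hL⟩ := hF.1 y hy (fun _ => p) hpF
        have hL' : Tendsto (fun n => dist (y n) p / r n) atTop (𝓝 L) := hL
        have hL0 : (0 : ℝ) ≤ L :=
          ge_of_tendsto' hL' fun n => div_nonneg dist_nonneg (hscal.1 n).le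
        rcases hL0.lt_or_eq with hlt | heq
        · exact absurd hL' (h y hy L hlt)
        · rwa [← heq] at hL'
      have hx_stab : ∀ y ∈ F, Tendsto (fun n => dist (x n) (y n) / r n) atTop (𝓝 (1 : ℝ)) := by
        intro y hy
        have hlo : Tendsto (fun n => dist (x n) p / r n - dist (y n) p / r n)
            atTop (𝓝 (1 : ℝ)) := by simpa using hx.sub (hall0 y hy)
        have hhi : Tendsto (fun n => dist (x n) p / r n + dist (y n) p / r n)
            atTop (𝓝 (1 : ℝ)) := by simpa using hx.add (hall0 y hy)
        refine tendsto_of_tendsto_of_tendsto_of_le_of_le hlo hhi ?_ ?_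
        · intro n
          dsimp only
          rw [← sub_div]
          refine (div_le_div_iff_of_pos_right (hscal.1 n)).mpr ?_
          have := dist_triangle (x n) (y n) p
          linarith
        · intro n
          dsimp only
          rw [← add_div]
          refine (div_le_div_iff_of_pos_right (hscal.1 n)).mpr ?_
          exact dist_triangle_right _ _ _
      have hself : SelfStable r (insert x F) := by
        rintro a (rfl | ha) b (rfl | hb)
        · exact ⟨0, by simpa [dist_self] using
            (tendsto_const_nhds : Tendsto (fun _ : ℕ => (0:ℝ)) atTop (𝓝 0))⟩
        · exact ⟨1, hx_stab b hb⟩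
        · refine ⟨1, ?_⟩
          have := hx_stab a ha
          simpa [dist_comm] using this
        · exact hF.1 a ha b hb
      have heq := hF.2 (insert x F) hself (subset_insert x F)
      have hxF : x ∈ F := heq ▸ mem_insert x F
      exact h x hxF 1 one_pos hx
    obtain ⟨φ, hφ, G, hG, hpG, hcG, hinf, hsup⟩ :=
      core p r hscal F hF.1 hpF x hx hpos
    obtain ⟨y, hyF, L, hLpos, hL⟩ := hpos
    have hmid : rhoFInf p r F ≤ rhoFSup p r F := by
      refine le_trans (sInf_le ⟨y, hyF, L, hL, hLpos, rfl⟩)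
        (le_sSup ⟨y, hyF, L, hL, rfl⟩)
    exact ⟨φ, hφ, G, hG, hpG, hcG, hinf, hmid, hsup⟩
  · -- part (b)
    rintro r F hr hF hpF ⟨c, hcF, hc⟩
    obtain ⟨ψ, hψ, hanti⟩ := exists_subseq_antitone hr
    have hr' : ScalingSeq (fun k => r (ψ k)) :=
      ⟨fun k => hr.1 _, hr.2.comp hψ.tendsto_atTop⟩
    have hF' : SelfStable (fun k => r (ψ k)) ((fun y => fun k => y (ψ k)) '' F) := by
      rintro a ⟨a0, ha0, rfl⟩ b ⟨b0, hb0, rfl⟩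
      obtain ⟨L, hL⟩ := hF.1 a0 ha0 b0 hb0
      exact ⟨L, hL.comp hψ.tendsto_atTop⟩
    have hpF' : (fun _ : ℕ => p) ∈ (fun y => fun k => y (ψ k)) '' F :=
      ⟨fun _ => p, hpF, rfl⟩
    have hc' : Tendsto (fun k => dist (c (ψ k)) p / r (ψ k)) atTop (𝓝 (1 : ℝ)) :=
      hc.comp hψ.tendsto_atTop
    have hpos' : ∃ y ∈ (fun y => fun k => y (ψ k)) '' F, ∃ L : ℝ, 0 < L ∧
        Tendsto (fun n => dist (y n) p / r (ψ n)) atTop (𝓝 L) :=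
      ⟨fun k => c (ψ k), ⟨c, hcF, rfl⟩, 1, one_pos, hc'⟩
    obtain ⟨φ, hφ, G, hG, hpG, hcG, hinf, hsup⟩ :=
      core p (fun k => r (ψ k)) hr' ((fun y => fun k => y (ψ k)) '' F) hF' hpF'
        (fun k => c (ψ k)) hc' hpos'
    refine ⟨fun k => r (ψ (φ k)), G, ?_, hG, hpG, ?_, ?_, ?_⟩
    · -- normality of μ
      refine ⟨⟨fun k => hr.1 _, ?_⟩, ?_, ?_⟩
      · exact hr.2.comp ((hψ.comp hφ).tendsto_atTop)
      · exact Eventually.of_forall fun k => hanti (hφ.monotone (Nat.le_succ k))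
      · obtain ⟨c', hc'G, hc'lim⟩ := hcG
        exact ⟨c', hc'lim⟩
    · -- inf inequality
      exact hinf.trans (rho_mono_subseq p r hψ F).1
    · -- middle inequality
      exact le_trans (sInf_le ⟨c, hcF, 1, hc, one_pos, rfl⟩)
        (le_sSup ⟨c, hcF, 1, hc, rfl⟩)
    · -- sup inequality
      exact (rho_mono_subseq p r hψ F).2.trans hsup
end
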